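/- If I is a strongly stable monomial ideal generated in a single degree d in K[x_1,...,x_n], a-determined for a vector a in N^n, then the a-dual \hat{I}^{[a]} has linear quotients with respect to a suitable ordering of its minimal generators; consequently \hat{I}^{[a]} has a linear resolution. -/

import Mathlib

open MvPolynomial Finsupp

/-- The monomial ideal generated by the monomials with exponent vectors in `S`. -/
noncomputable def monomialIdeal (K : Type*) [Field K] {n : ℕ} (S : Finset (Fin n →₀ ℕ)) :
    Ideal (MvPolynomial (Fin n) K) :=
  Ideal.span ((fun s => (monomial s (1 : K))) '' S)

/-- Exponent vectors of the generators `x^a / f` of the `a`-dual. -/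
noncomputable def dualGens {n : ℕ} (a : Fin n →₀ ℕ) (S : Finset (Fin n →₀ ℕ)) :
    Finset (Fin n →₀ ℕ) :=
  S.image (fun s => a - s)

/-- Strong stability: for every monomial `m ∈ I`, every `x_i | m` and `j < i`,
`m·x_j/x_i ∈ I`. -/
def IsStronglyStable {K : Type*} [Field K] {n : ℕ}
    (I : Ideal (MvPolynomial (Fin n) K)) : Prop :=
  ∀ (s : Fin n →₀ ℕ) (i j : Fin n), monomial s (1 : K) ∈ I →
    s i ≠ 0 → j < i →
    monomial (s + single j 1 - single i 1) (1 : K) ∈ I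

/-- A monomial ideal with (minimal) generating exponent vectors `T` has linear
quotients if there is an ordering `g_1,…,g_v` of `T` such that each colon ideal
`(g_1,…,g_{k-1}) : g_k` is generated by variables. -/
def HasLinearQuotients (K : Type*) [Field K] {n : ℕ} (T : Finset (Fin n →₀ ℕ)) : Prop :=
  ∃ L : List (Fin n →₀ ℕ), L.Nodup ∧ L.toFinset = T ∧
    ∀ (k : ℕ) (hk : k < L.length), 1 ≤ k →
      ∃ V : Set (Fin n),
        Submodule.colon (monomialIdeal K (L.take k).toFinset)
            (Ideal.span {monomial (L.get ⟨k, hk⟩) (1 : K)}) =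
          Ideal.span ((fun j => (X j : MvPolynomial (Fin n) K)) '' V)

section Aux

variable {K : Type*} [Field K] {n : ℕ}

lemma monomial_mem_monomialIdeal_iff {c : Fin n →₀ ℕ} {S : Finset (Fin n →₀ ℕ)} :
    monomial c (1 : K) ∈ monomialIdeal K S ↔ ∃ s ∈ S, s ≤ c := by
  rw [monomialIdeal, mem_ideal_span_monomial_image]
  simp [support_monomial]

def degOf {n : ℕ} (f : Fin n →₀ ℕ) : ℕ := ∑ i, f i

lemma sum_eq_degOf (f : Fin n →₀ ℕ) : (f.sum fun _ e => e) = degOf f :=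
  Finsupp.sum_fintype _ _ (fun _ => rfl)

lemma eq_of_le_of_degOf_eq {b c : Fin n →₀ ℕ} (h : b ≤ c) (hs : degOf b = degOf c) :
    b = c := by
  ext i
  have hle : ∀ i, b i ≤ c i := fun i => Finsupp.le_def.mp h i
  exact (Finset.sum_eq_sum_iff_of_le (fun i _ => hle i)).mp hs i (Finset.mem_univ i)

lemma degOf_single (t : Fin n) : degOf (single t (1:ℕ)) = 1 := by
  simp [degOf, Finsupp.single_apply]

lemma degOf_add (b c : Fin n →₀ ℕ) : degOf (b + c) = degOf b + degOf c := by
  simp [degOf, Finsupp.add_apply, Finset.sum_add_distrib]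

lemma colon_eq_span_X (T : Finset (Fin n →₀ ℕ)) (u : Fin n →₀ ℕ)
    (H : ∀ w ∈ T, ∀ c : Fin n →₀ ℕ, w ≤ c + u →
      ∃ t, c t ≠ 0 ∧ ∃ w' ∈ T, w' ≤ u + single t 1) :
    Submodule.colon (monomialIdeal K T)
        (Ideal.span {monomial u (1 : K)}) =
      Ideal.span ((fun j => (X j : MvPolynomial (Fin n) K)) ''
        {t | ∃ w' ∈ T, w' ≤ u + single t 1}) := by
  apply le_antisymm
  · intro p hp
    have hmem : p * monomial u (1:K) ∈ monomialIdeal K T := by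
      simpa using Submodule.mem_colon.mp hp (monomial u 1) (Ideal.subset_span rfl)
    rw [show ((fun j => (X j : MvPolynomial (Fin n) K)) '' _) =
        (MvPolynomial.X '' {t | ∃ w' ∈ T, w' ≤ u + single t 1}) from rfl]
    rw [mem_ideal_span_X_image]
    intro c hc
    have hcu : c + u ∈ (p * monomial u (1:K)).support := by
      rw [MvPolynomial.mem_support_iff, MvPolynomial.coeff_mul_monomial, mul_one]
      exact MvPolynomial.mem_support_iff.mp hc
    obtain ⟨w, hwT, hwle⟩ := (mem_ideal_span_monomial_image).mp hmem _ hcu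
    obtain ⟨t, hct, hw'⟩ := H w (by exact_mod_cast hwT) c hwle
    exact ⟨t, hw', hct⟩
  · rw [Ideal.span_le]
    rintro _ ⟨t, ⟨w', hw'T, hw'le⟩, rfl⟩
    rw [SetLike.mem_coe, Submodule.mem_colon]
    intro q hq
    obtain ⟨r, rfl⟩ := Ideal.mem_span_singleton'.mp hq
    have hX : (X t : MvPolynomial (Fin n) K) * monomial u 1 ∈ monomialIdeal K T := by
      rw [X, monomial_mul, one_mul, add_comm]
      exact monomial_mem_monomialIdeal_iff.mpr ⟨w', hw'T, hw'le⟩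
    have hrw : (X t : MvPolynomial (Fin n) K) * (r * monomial u 1) =
        r * ((X t) * monomial u 1) := by ring
    rw [smul_eq_mul, hrw]
    exact Ideal.mul_mem_left _ _ hX

end Aux

/-- lex-decreasing relation used to sort the generators of `S`. -/
def lexGe {n : ℕ} (s s' : Fin n →₀ ℕ) : Prop := toLex s' ≤ toLex s

instance {n : ℕ} : DecidableRel (lexGe (n := n)) := fun s s' =>
  inferInstanceAs (Decidable (toLex s' ≤ toLex s))

instance {n : ℕ} : IsTrans (Fin n →₀ ℕ) lexGe :=
  ⟨fun _ _ _ h1 h2 => le_trans h2 h1⟩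

instance {n : ℕ} : IsAntisymm (Fin n →₀ ℕ) lexGe :=
  ⟨fun _ _ h1 h2 => toLex.injective (le_antisymm h2 h1)⟩

instance {n : ℕ} : IsTotal (Fin n →₀ ℕ) lexGe :=
  ⟨fun s s' => (le_total (toLex s') (toLex s)).imp id id⟩

lemma toLex_lt_iff {n : ℕ} {s s' : Fin n →₀ ℕ} :
    toLex s < toLex s' ↔ ∃ j, (∀ d, d < j → s d = s' d) ∧ s j < s' j :=
  Finsupp.lex_def

lemma list_toFinset_map {α β : Type*} [DecidableEq α] [DecidableEq β]
    (l : List α) (f : α → β) : (l.map f).toFinset = l.toFinset.image f := by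
  ext b; simp [List.mem_map]

/-- If `I` is a strongly stable monomial ideal generated in a single degree `d` and
`a`-determined, then its `a`-dual has linear quotients with respect to a suitable
ordering of its minimal generators. -/
theorem dual_stronglyStable_hasLinearQuotients (K : Type*) [Field K] {n d : ℕ}
    (a : Fin n →₀ ℕ) (S : Finset (Fin n →₀ ℕ))
    (hstable : IsStronglyStable (monomialIdeal K S))
    (hdeg : ∀ s ∈ S, (s.sum fun _ e => e) = d)
    (hdet : ∀ s ∈ S, s ≤ a) :
    HasLinearQuotients K (dualGens a S) := by
  classical
  set f : (Fin n →₀ ℕ) → (Fin n →₀ ℕ) := fun s => a - s with hf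
  set Ls : List (Fin n →₀ ℕ) := S.sort lexGe with hLs
  have hLs_nodup : Ls.Nodup := Finset.sort_nodup _ _
  have hLs_sorted : List.Pairwise lexGe Ls := Finset.pairwise_sort _ _
  have hmemLs : ∀ x, x ∈ Ls ↔ x ∈ S := fun x => Finset.mem_sort _
  refine ⟨Ls.map f, ?_, ?_, ?_⟩
  · refine hLs_nodup.map_on ?_
    intro x hx y hy hxy
    have hx' : x ≤ a := hdet x ((hmemLs x).mp hx)
    have hy' : y ≤ a := hdet y ((hmemLs y).mp hy)
    calc x = a - (a - x) := (tsub_tsub_cancel_of_le hx').symm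
      _ = a - (a - y) := by rw [show a - x = a - y from hxy]
      _ = y := tsub_tsub_cancel_of_le hy'
  · rw [list_toFinset_map, Finset.sort_toFinset]; rfl
  · intro k hk _
    have hkLs : k < Ls.length := by simpa using hk
    set s : Fin n →₀ ℕ := Ls[k] with hs_def
    have hsS : s ∈ S := (hmemLs s).mp (List.getElem_mem hkLs)
    have hsa : s ≤ a := hdet s hsS
    have hgetk : (Ls.map f).get ⟨k, hk⟩ = a - s := by
      rw [List.get_eq_getElem, List.getElem_map]
    -- membership of later-in-lex elements in the initial segment
    have hmem_take : ∀ s'' ∈ S, toLex s < toLex s'' →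
        a - s'' ∈ ((Ls.map f).take k).toFinset := by
      intro s'' hs'' hlt
      have hs''Ls : s'' ∈ Ls := (hmemLs s'').mpr hs''
      have htake : s'' ∈ Ls.take k := by
        by_contra hnot
        have hdrop : s'' ∈ Ls.drop k := by
          rcases List.mem_append.mp ((List.take_append_drop k Ls).symm ▸ hs''Ls) with h | h
          · exact absurd h hnot
          · exact h
        rw [List.drop_eq_getElem_cons hkLs] at hdrop
        rcases List.mem_cons.mp hdrop with h | h
        · rw [h] at hlt
          rw [← hs_def] at hlt
          exact lt_irrefl _ hlt
        · obtain ⟨j, hj, hj_eq⟩ := List.mem_iff_getElem.mp h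
          have hjlen : k + 1 + j < Ls.length := by
            have := hj; simp [List.length_drop] at this; omega
          have hj_eq' : Ls[k + 1 + j] = s'' := by
            rw [← List.getElem_drop]; exact hj_eq
          have hrel := hLs_sorted.rel_get_of_lt
            (a := ⟨k, hkLs⟩) (b := ⟨k + 1 + j, hjlen⟩) (by simp; omega)
          simp only [List.get_eq_getElem, hj_eq'] at hrel
          exact absurd (hrel : toLex s'' ≤ toLex s) (not_le.mpr hlt)
      rw [List.mem_toFinset, ← List.map_take]
      exact List.mem_map_of_mem (f := f) htake
    refine ⟨{t | ∃ w' ∈ ((Ls.map f).take k).toFinset, w' ≤ (a - s) + single t 1}, ?_⟩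
    rw [hgetk]
    apply colon_eq_span_X
    intro w hw c hwc
    -- unpack w as a - s'
    obtain ⟨s', hs'take, rfl⟩ : ∃ s' ∈ Ls.take k, f s' = w := by
      have h := List.mem_toFinset.mp hw
      rw [← List.map_take] at h
      exact List.mem_map.mp h
    have hs'Ls : s' ∈ Ls := List.mem_of_mem_take hs'take
    have hs'S : s' ∈ S := (hmemLs s').mp hs'Ls
    have hs'a : s' ≤ a := hdet s' hs'S
    -- strict lex inequality toLex s < toLex s'
    obtain ⟨m, hm, hm_eq⟩ := List.mem_iff_getElem.mp hs'take
    have hmk : m < k := by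
      have := hm; simp [List.length_take] at this; omega
    have hmLs : m < Ls.length := lt_trans hmk hkLs
    have hm_eq' : Ls[m] = s' := by rw [← List.getElem_take]; exact hm_eq
    have hle : toLex s ≤ toLex s' := by
      have hrel := hLs_sorted.rel_get_of_lt (a := ⟨m, hmLs⟩) (b := ⟨k, hkLs⟩) (by simp [hmk])
      simp only [List.get_eq_getElem, hm_eq'] at hrel
      exact hrel
    have hne : s ≠ s' := by
      intro h
      have h2 : Ls[k] = Ls[m] := by rw [hm_eq', ← hs_def]; exact h
      have := (hLs_nodup.getElem_inj_iff).mp h2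
      omega
    have hlt : toLex s < toLex s' := hle.lt_of_ne (fun h => hne (toLex.injective h))
    obtain ⟨p, hp_eq, hp_lt⟩ := toLex_lt_iff.mp hlt
    -- degrees
    have hdegs : degOf s = d := by rw [← sum_eq_degOf]; exact hdeg s hsS
    have hdegs' : degOf s' = d := by rw [← sum_eq_degOf]; exact hdeg s' hs'S
    -- find t with s' t < s t
    obtain ⟨t, hts⟩ : ∃ t, s' t < s t := by
      by_contra hno
      push_neg at hno
      have hsum : ∑ i, s i = ∑ i, s' i := by
        have : degOf s = degOf s' := by rw [hdegs, hdegs']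
        simpa [degOf] using this
      have := (Finset.sum_eq_sum_iff_of_le (fun i _ => hno i)).mp hsum p (Finset.mem_univ p)
      omega
    have hpt : p < t := by
      rcases lt_trichotomy t p with h | h | h
      · have := hp_eq t h; omega
      · subst h; omega
      · exact h
    have hct : c t ≠ 0 := by
      have h1 := Finsupp.le_def.mp hwc t
      rw [Finsupp.tsub_apply, Finsupp.add_apply, Finsupp.tsub_apply] at h1
      have h2 := Finsupp.le_def.mp hsa t
      have h3 := Finsupp.le_def.mp hs'a t
      omega
    -- strong stability gives s'' ∈ S with s'' = s + e_p - e_t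
    have hsmem : monomial s (1:K) ∈ monomialIdeal K S :=
      monomial_mem_monomialIdeal_iff.mpr ⟨s, hsS, le_refl s⟩
    have hst := hstable s t p hsmem (by omega) hpt
    obtain ⟨s'', hs''S, hs''le⟩ := monomial_mem_monomialIdeal_iff.mp hst
    have hsingle_le : single t 1 ≤ s + single p 1 := by
      rw [Finsupp.le_def]
      intro i
      rcases eq_or_ne t i with rfl | h
      · rw [Finsupp.add_apply]
        simp only [Finsupp.single_eq_same]
        omega
      · rw [Finsupp.single_eq_of_ne' h]
        exact Nat.zero_le _
    have hvadd : (s + single p 1 - single t 1) + single t 1 = s + single p 1 :=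
      tsub_add_cancel_of_le hsingle_le
    have hdegv : degOf (s + single p 1 - single t 1) = d := by
      have hdv := congrArg degOf hvadd
      rw [degOf_add, degOf_add, degOf_single, degOf_single] at hdv
      omega
    have hs''eq : s'' = s + single p 1 - single t 1 := by
      refine eq_of_le_of_degOf_eq hs''le ?_
      rw [hdegv, ← sum_eq_degOf]
      exact hdeg s'' hs''S
    have happly : ∀ i, s'' i + single t 1 i = s i + single p 1 i := by
      intro i
      have := congrArg (fun g : Fin n →₀ ℕ => g i) hvadd
      simp only [Finsupp.add_apply] at this
      rw [hs''eq, ← this, Finsupp.tsub_apply, Finsupp.add_apply]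
    have hlt2 : toLex s < toLex s'' := by
      rw [toLex_lt_iff]
      refine ⟨p, fun dd hdd => ?_, ?_⟩
      · have h1 := happly dd
        have h2 : single t 1 dd = 0 := Finsupp.single_eq_of_ne' (by
          intro h; rw [h] at hpt; exact absurd (lt_trans hdd hpt) (lt_irrefl dd))
        have h3 : single p 1 dd = 0 := Finsupp.single_eq_of_ne' (ne_of_gt hdd)
        omega
      · have h1 := happly p
        have h2 : single t 1 p = 0 := Finsupp.single_eq_of_ne' (ne_of_gt hpt)
        have h3 : single p 1 p = 1 := Finsupp.single_eq_same
        omega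
    refine ⟨t, hct, a - s'', hmem_take s'' hs''S hlt2, ?_⟩
    rw [Finsupp.le_def]
    intro i
    have h1 := happly i
    have h2 := Finsupp.le_def.mp hsa i
    have h3 := Finsupp.le_def.mp (hdet s'' hs''S) i
    have h4 : single p 1 i ≤ 1 := by
      rw [Finsupp.single_apply]; split <;> omega
    rw [Finsupp.add_apply, Finsupp.tsub_apply, Finsupp.tsub_apply]
    omega
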